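/- Let F′ ⊂ ℝ² be the convex hull of the six points (1,0), (0,1), (−1,1), (−1,0), (0,−1), (1,−1), let h : F′ → ℝ be defined by h(x,y) = 1 − 2x if x ≥ 0 and h(x,y) = 1 − x if x ≤ 0, and let P = {(x,y,t) ∈ ℝ³ : (x,y) ∈ F′ and −1 ≤ t ≤ h(x,y)}, with λ the three-dimensional Lebesgue measure. Then λ(P) = 16/3, ∫_P (h(0,0) − h(x,y) + t) dλ(x,y,t) = −3/8, and ∫_P t dλ(x,y,t) = 3/8. Consequently, (1/λ(P)) ∫_P (h(0,0) − h(x,y) + t) dλ = −9/128 < 0 and (1/λ(P)) ∫_P t dλ = 9/128 > 0. -/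

import Mathlib

open MeasureTheory Set

/-- The hexagon with vertices `(1,0), (0,1), (-1,1), (-1,0), (0,-1), (1,-1)`. -/
def F9 : Set (ℝ × ℝ) :=
  convexHull ℝ {(1, 0), (0, 1), (-1, 1), (-1, 0), (0, -1), (1, -1)}

/-- The piecewise linear concave function `h(x,y) = 1 - 2x` for `x ≥ 0` and
`h(x,y) = 1 - x` for `x ≤ 0` (the two expressions agree at `x = 0`). -/
noncomputable def h9 (q : ℝ × ℝ) : ℝ :=
  if 0 ≤ q.1 then 1 - 2 * q.1 else 1 - q.1

/-- The reflexive polytope of a singular Gorenstein toric Fano 3-fold: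
`P = {(x,y,t) : (x,y) ∈ F′, -1 ≤ t ≤ h(x,y)}`. -/
noncomputable def P9 : Set (ℝ × ℝ × ℝ) :=
  {p | (p.1, p.2.1) ∈ F9 ∧ -1 ≤ p.2.2 ∧ p.2.2 ≤ h9 (p.1, p.2.1)}

lemma mem_F9_of (a b c d e f : ℝ) (ha : 0 ≤ a) (hb : 0 ≤ b) (hc : 0 ≤ c)
    (hd : 0 ≤ d) (he : 0 ≤ e) (hf : 0 ≤ f) (hs : a + b + c + d + e + f = 1) :
    ((a - c - d + f, b + c - e - f) : ℝ × ℝ) ∈ F9 := by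
  have h := (convex_convexHull ℝ ({(1, 0), (0, 1), (-1, 1), (-1, 0), (0, -1), (1, -1)} : Set (ℝ × ℝ))).sum_mem
    (t := (Finset.univ : Finset (Fin 6))) (w := ![a, b, c, d, e, f])
    (z := ![(1, 0), (0, 1), (-1, 1), (-1, 0), (0, -1), (1, -1)])
    (fun i _ => by fin_cases i <;> assumption)
    (by rw [Fin.sum_univ_six]; exact hs)
    (fun i _ => by
      apply subset_convexHull
      simp only [Set.mem_insert_iff, Set.mem_singleton_iff]
      fin_cases i
      exacts [Or.inl rfl, Or.inr (Or.inl rfl), Or.inr (Or.inr (Or.inl rfl)),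
        Or.inr (Or.inr (Or.inr (Or.inl rfl))), Or.inr (Or.inr (Or.inr (Or.inr (Or.inl rfl)))),
        Or.inr (Or.inr (Or.inr (Or.inr (Or.inr rfl))))])
  have he : ∑ i : Fin 6, ![a, b, c, d, e, f] i • (![(1, 0), (0, 1), (-1, 1), (-1, 0), (0, -1), (1, -1)] : Fin 6 → ℝ × ℝ) i
      = ((a - c - d + f, b + c - e - f) : ℝ × ℝ) := by
    have m5 : (![a, b, c, d, e, f] : Fin 6 → ℝ) 5 = f := rfl
    have z5 : (![(1, 0), (0, 1), (-1, 1), (-1, 0), (0, -1), (1, -1)] : Fin 6 → ℝ × ℝ) 5 = (1, -1) := rfl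
    simp [Fin.sum_univ_six, m5, z5, Prod.ext_iff]
    constructor <;> ring
  rw [he] at h
  exact h

def Hex : Set (ℝ × ℝ) :=
  {q | -1 ≤ q.1 ∧ q.1 ≤ 1 ∧ -1 ≤ q.2 ∧ q.2 ≤ 1 ∧ -1 ≤ q.1 + q.2 ∧ q.1 + q.2 ≤ 1}

lemma F9_eq : F9 = Hex := by
  apply le_antisymm
  · apply convexHull_min
    · intro p hp
      simp only [Set.mem_insert_iff, Set.mem_singleton_iff] at hp
      rcases hp with h | h | h | h | h | h <;> subst h <;>
        exact ⟨by norm_num, by norm_num, by norm_num, by norm_num, by norm_num, by norm_num⟩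
    · rintro p hp q hq s t hs ht hst
      obtain ⟨h1, h2, h3, h4, h5, h6⟩ := hp
      obtain ⟨g1, g2, g3, g4, g5, g6⟩ := hq
      simp only [Hex, Set.mem_setOf_eq, Prod.fst_add, Prod.snd_add, Prod.smul_fst,
        Prod.smul_snd, smul_eq_mul]
      refine ⟨by nlinarith, by nlinarith, by nlinarith, by nlinarith, by nlinarith, by nlinarith⟩
  · rintro ⟨x, y⟩ ⟨h1, h2, h3, h4, h5, h6⟩
    simp only at h1 h2 h3 h4 h5 h6
    rcases le_or_gt 0 x with hx | hx <;> rcases le_or_gt 0 y with hy | hy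
    · have := mem_F9_of (x + (1 - x - y)/2) y 0 ((1 - x - y)/2) 0 0
        (by linarith) hy le_rfl (by linarith) le_rfl le_rfl (by ring)
      convert this using 2 <;> ring
    · have := mem_F9_of (x*(1+y) + (1-x)*(1+y)/2) 0 0 ((1-x)*(1+y)/2) ((1-x)*(-y)) (x*(-y))
        (by nlinarith) le_rfl le_rfl (by nlinarith) (by nlinarith) (by nlinarith) (by ring)
      convert this using 2 <;> ring
    · have := mem_F9_of ((1+x)*(1-y)/2) ((1+x)*y) ((-x)*y) ((-x)*(1-y) + (1+x)*(1-y)/2) 0 0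
        (by nlinarith) (by nlinarith) (by nlinarith) (by nlinarith) le_rfl le_rfl (by ring)
      convert this using 2 <;> ring
    · have := mem_F9_of ((1+x+y)/2) 0 0 (-x + (1+x+y)/2) (-y) 0
        (by linarith) le_rfl le_rfl (by linarith) (by linarith) le_rfl (by ring)
      convert this using 2 <;> ring

noncomputable def cX (x : ℝ) : ℝ := min (1 - 2 * x) (1 - x)

lemma h9_eq (q : ℝ × ℝ) : h9 q = cX q.1 := by
  unfold h9 cX
  rcases le_or_gt 0 q.1 with h | h
  · rw [if_pos h, min_eq_left (by linarith)]
  · rw [if_neg (not_le.2 h), min_eq_right (by linarith)]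

noncomputable def S9 (x : ℝ) : Set (ℝ × ℝ) :=
  Icc (max (-1) (-1 - x)) (min 1 (1 - x)) ×ˢ Icc (-1) (cX x)

lemma P9_eq : P9 = {p : ℝ × ℝ × ℝ | p.1 ∈ Icc (-1 : ℝ) 1 ∧ p.2 ∈ S9 p.1} := by
  ext ⟨x, y, t⟩
  simp only [P9, S9, F9_eq, Hex, Set.mem_setOf_eq, Set.mem_prod, Set.mem_Icc, h9_eq, cX,
    le_min_iff, max_le_iff]
  constructor
  · rintro ⟨⟨h1, h2, h3, h4, h5, h6⟩, h7, ⟨h8, h9⟩⟩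
    exact ⟨⟨h1, h2⟩, ⟨⟨h3, by linarith⟩, h4, by linarith⟩, h7, h8, h9⟩
  · rintro ⟨⟨h1, h2⟩, ⟨⟨h3, h4⟩, h5, h6⟩, h7, h8, h9⟩
    exact ⟨⟨h1, h2, h3, h5, by linarith, by linarith⟩, h7, h8, h9⟩

lemma isCompact_P9 : IsCompact P9 := by
  have hclosed : IsClosed P9 := by
    have hF : IsClosed F9 :=
      (Set.Finite.isCompact_convexHull (𝕜 := ℝ) (by
        apply Set.Finite.insert; apply Set.Finite.insert; apply Set.Finite.insert
        apply Set.Finite.insert; apply Set.Finite.insert; exact Set.finite_singleton _)).isClosed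
    have h1 : IsClosed {p : ℝ × ℝ × ℝ | (p.1, p.2.1) ∈ F9} :=
      hF.preimage (by fun_prop)
    have h2 : IsClosed {p : ℝ × ℝ × ℝ | -1 ≤ p.2.2} :=
      isClosed_le continuous_const (by fun_prop)
    have h3 : IsClosed {p : ℝ × ℝ × ℝ | p.2.2 ≤ h9 (p.1, p.2.1)} := by
      have : {p : ℝ × ℝ × ℝ | p.2.2 ≤ h9 (p.1, p.2.1)}
          = {p : ℝ × ℝ × ℝ | p.2.2 ≤ cX p.1} := by
        ext p; simp [h9_eq]
      rw [this]
      exact isClosed_le (by fun_prop) (by unfold cX; fun_prop)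
    have : P9 = {p : ℝ × ℝ × ℝ | (p.1, p.2.1) ∈ F9} ∩
        ({p : ℝ × ℝ × ℝ | -1 ≤ p.2.2} ∩ {p : ℝ × ℝ × ℝ | p.2.2 ≤ h9 (p.1, p.2.1)}) := by
      ext p; simp [P9, Set.mem_setOf_eq, and_assoc]
    rw [this]
    exact h1.inter (h2.inter h3)
  apply IsCompact.of_isClosed_subset (isCompact_Icc (a := ((-1 : ℝ), (-1 : ℝ), (-1 : ℝ)))
    (b := ((1 : ℝ), (1 : ℝ), (3 : ℝ)))) hclosed
  intro p hp
  rw [P9_eq] at hp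
  obtain ⟨⟨h1, h2⟩, ⟨h3, h4⟩, h5, h6⟩ := hp
  simp only [S9, cX, Set.mem_Icc, le_min_iff, max_le_iff] at h3 h4 h6 ⊢
  simp only [Prod.le_def]
  refine ⟨⟨h1, ?_, ?_⟩, h2, ?_, ?_⟩ <;>
    first
    | linarith [h3.1, h4.1]
    | linarith [h6.2]

lemma measurableSet_P9 : MeasurableSet P9 := isCompact_P9.isClosed.measurableSet

lemma measurableSet_S9 (x : ℝ) : MeasurableSet (S9 x) :=
  measurableSet_Icc.prod measurableSet_Icc

lemma key9 (f : ℝ × ℝ × ℝ → ℝ) (hf : IntegrableOn f P9) :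
    ∫ p in P9, f p = ∫ x in Icc (-1 : ℝ) 1, ∫ q in S9 x, f (x, q) := by
  rw [← integral_indicator measurableSet_P9]
  have hint : Integrable (P9.indicator f) ((volume : Measure ℝ).prod (volume : Measure (ℝ × ℝ))) := by
    rw [← Measure.volume_eq_prod, integrable_indicator_iff measurableSet_P9]
    exact hf
  rw [Measure.volume_eq_prod, integral_prod _ hint]
  have hx : ∀ x : ℝ, (∫ q, P9.indicator f (x, q)) =
      (Icc (-1 : ℝ) 1).indicator (fun x => ∫ q in S9 x, f (x, q)) x := by
    intro x
    by_cases hx : x ∈ Icc (-1 : ℝ) 1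
    · rw [Set.indicator_of_mem hx, ← integral_indicator (measurableSet_S9 x)]
      congr 1
      funext q
      by_cases hq : q ∈ S9 x
      · rw [Set.indicator_of_mem hq, Set.indicator_of_mem (by rw [P9_eq]; exact ⟨hx, hq⟩)]
      · rw [Set.indicator_of_notMem hq, Set.indicator_of_notMem (by
          rw [P9_eq]; rintro ⟨-, h⟩; exact hq h)]
    · have hzero : ∀ q : ℝ × ℝ, P9.indicator f (x, q) = 0 := fun q =>
        Set.indicator_of_notMem (by rw [P9_eq]; rintro ⟨h, -⟩; exact hx h) _
      rw [Set.indicator_of_notMem hx]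
      simp [hzero]
  simp_rw [hx]
  rw [integral_indicator measurableSet_Icc]

lemma interval_linear (a b A B : ℝ) :
    ∫ t in a..b, (A + B * t) = A * (b - a) + B * (b ^ 2 - a ^ 2) / 2 := by
  have hd : ∀ t ∈ Set.uIcc a b, HasDerivAt (fun t => A * t + B * t ^ 2 / 2) (A + B * t) t := by
    intro t _
    have h1 : HasDerivAt (fun t : ℝ => A * t) A t := by
      simpa using (hasDerivAt_id t).const_mul A
    have h2 : HasDerivAt (fun t : ℝ => B * t ^ 2 / 2) (B * t) t := by
      have := ((hasDerivAt_pow 2 t).const_mul B).div_const 2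
      simpa using this.congr_deriv (by ring)
    exact h1.add h2
  rw [intervalIntegral.integral_eq_sub_of_hasDerivAt hd
    ((Continuous.intervalIntegrable (by fun_prop) a b))]
  ring

lemma interval_cubic (a b C0 C1 C2 C3 : ℝ) :
    ∫ x in a..b, (C0 + C1 * x + C2 * x ^ 2 + C3 * x ^ 3) =
      (C0 * b + C1 * b ^ 2 / 2 + C2 * b ^ 3 / 3 + C3 * b ^ 4 / 4) -
      (C0 * a + C1 * a ^ 2 / 2 + C2 * a ^ 3 / 3 + C3 * a ^ 4 / 4) := by
  have hd : ∀ x ∈ Set.uIcc a b, HasDerivAt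
      (fun x => C0 * x + C1 * x ^ 2 / 2 + C2 * x ^ 3 / 3 + C3 * x ^ 4 / 4)
      (C0 + C1 * x + C2 * x ^ 2 + C3 * x ^ 3) x := by
    intro x _
    have h0 : HasDerivAt (fun x : ℝ => C0 * x) C0 x := by
      simpa using (hasDerivAt_id x).const_mul C0
    have h1 : HasDerivAt (fun x : ℝ => C1 * x ^ 2 / 2) (C1 * x) x := by
      have := ((hasDerivAt_pow 2 x).const_mul C1).div_const 2
      simpa using this.congr_deriv (by ring)
    have h2 : HasDerivAt (fun x : ℝ => C2 * x ^ 3 / 3) (C2 * x ^ 2) x := by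
      have := ((hasDerivAt_pow 3 x).const_mul C2).div_const 3
      simpa using this.congr_deriv (by ring)
    have h3 : HasDerivAt (fun x : ℝ => C3 * x ^ 4 / 4) (C3 * x ^ 3) x := by
      have := ((hasDerivAt_pow 4 x).const_mul C3).div_const 4
      simpa using this.congr_deriv (by ring)
    exact ((h0.add h1).add h2).add h3
  rw [intervalIntegral.integral_eq_sub_of_hasDerivAt hd
    ((Continuous.intervalIntegrable (by fun_prop) a b))]

lemma cX_ge (x : ℝ) (hx : x ∈ Icc (-1 : ℝ) 1) : -1 ≤ cX x := by
  obtain ⟨h1, h2⟩ := hx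
  simp only [cX, le_min_iff]
  constructor <;> linarith

lemma inner_eval (x A B : ℝ) (hx : x ∈ Icc (-1 : ℝ) 1) :
    ∫ q in S9 x, (A + B * q.2) =
      (min 1 (1 - x) - max (-1) (-1 - x)) *
        (A * (cX x + 1) + B * (cX x ^ 2 - 1) / 2) := by
  obtain ⟨hx1, hx2⟩ := hx
  have hyl : max (-1 : ℝ) (-1 - x) ≤ min 1 (1 - x) := by
    apply max_le <;> apply le_min <;> linarith
  have hc : (-1 : ℝ) ≤ cX x := cX_ge x ⟨hx1, hx2⟩
  rw [S9, Measure.volume_eq_prod, setIntegral_prod]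
  · have hinner : ∀ y : ℝ, (∫ t in Icc (-1 : ℝ) (cX x), (A + B * t)) =
        A * (cX x + 1) + B * (cX x ^ 2 - 1) / 2 := by
      intro y
      rw [integral_Icc_eq_integral_Ioc, ← intervalIntegral.integral_of_le hc,
        interval_linear]
      ring
    rw [setIntegral_congr_fun measurableSet_Icc (fun y _ => hinner y)]
    rw [setIntegral_const, measureReal_def, Real.volume_Icc, ENNReal.toReal_ofReal (by linarith), smul_eq_mul]
  · rw [← Measure.volume_eq_prod]
    exact (Continuous.continuousOn (by fun_prop)).integrableOn_compact'
      (isCompact_Icc.prod isCompact_Icc) (measurableSet_S9 x)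

lemma reduce9 (A : ℝ → ℝ) (B : ℝ)
    (hf : IntegrableOn (fun p : ℝ × ℝ × ℝ => A p.1 + B * p.2.2) P9) :
    ∫ p in P9, (A p.1 + B * p.2.2) =
      ∫ x in (-1 : ℝ)..1, ((min 1 (1 - x) - max (-1) (-1 - x)) *
        (A x * (cX x + 1) + B * (cX x ^ 2 - 1) / 2)) := by
  rw [key9 _ hf]
  rw [setIntegral_congr_fun measurableSet_Icc
    (fun x hx => inner_eval x (A x) B hx)]
  rw [integral_Icc_eq_integral_Ioc, intervalIntegral.integral_of_le (by norm_num)]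

lemma calc_piece (gfun : ℝ → ℝ) (hgc : Continuous gfun)
    (C0 C1 C2 C3 D0 D1 D2 D3 : ℝ)
    (hL : Set.EqOn gfun (fun x => C0 + C1 * x + C2 * x ^ 2 + C3 * x ^ 3) (Set.uIcc (-1) 0))
    (hR : Set.EqOn gfun (fun x => D0 + D1 * x + D2 * x ^ 2 + D3 * x ^ 3) (Set.uIcc 0 1)) :
    ∫ x in (-1 : ℝ)..1, gfun x =
      (-(C0 * (-1) + C1 * (-1) ^ 2 / 2 + C2 * (-1) ^ 3 / 3 + C3 * (-1) ^ 4 / 4)) +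
      (D0 * 1 + D1 * 1 ^ 2 / 2 + D2 * 1 ^ 3 / 3 + D3 * 1 ^ 4 / 4) := by
  rw [← intervalIntegral.integral_add_adjacent_intervals (a := (-1 : ℝ)) (b := 0) (c := 1)
    (hgc.intervalIntegrable _ _) (hgc.intervalIntegrable _ _)]
  rw [intervalIntegral.integral_congr hL, intervalIntegral.integral_congr hR,
    interval_cubic, interval_cubic]
  ring

lemma h900 : h9 (0, 0) = 1 := by norm_num [h9]

lemma hpt9 (p : ℝ × ℝ × ℝ) :
    h9 (0, 0) - h9 (p.1, p.2.1) + p.2.2 = max (2 * p.1) p.1 + p.2.2 := by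
  rw [h900, h9_eq]
  show 1 - cX p.1 + p.2.2 = max (2 * p.1) p.1 + p.2.2
  have hmx : 1 - cX p.1 = max (2 * p.1) p.1 := by
    unfold cX
    rcases le_total (2 * p.1) p.1 with h | h
    · rw [max_eq_right h, min_eq_right (by linarith)]; ring
    · rw [max_eq_left h, min_eq_left (by linarith)]; ring
  rw [hmx]

lemma hcont1 : Continuous fun x : ℝ => (min 1 (1 - x) - max (-1) (-1 - x)) * (cX x + 1) := by
  unfold cX; fun_prop

lemma hcont2 : Continuous fun x : ℝ =>
    (min 1 (1 - x) - max (-1) (-1 - x)) *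
      (max (2 * x) x * (cX x + 1) + (cX x ^ 2 - 1) / 2) := by
  unfold cX; fun_prop

lemma hcont3 : Continuous fun x : ℝ =>
    (min 1 (1 - x) - max (-1) (-1 - x)) * ((cX x ^ 2 - 1) / 2) := by
  unfold cX; fun_prop

lemma hval1 : ∫ x in (-1 : ℝ)..1, ((min 1 (1 - x) - max (-1) (-1 - x)) * (cX x + 1)) = 16 / 3 := by
  rw [calc_piece _ hcont1 4 0 (-1) 0 4 (-6) 2 0 ?_ ?_]
  · norm_num
  · intro x hx
    rw [Set.uIcc_of_le (by norm_num : (-1 : ℝ) ≤ 0)] at hx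
    obtain ⟨h1, h2⟩ := hx
    beta_reduce
    rw [min_eq_left (by linarith), max_eq_right (by linarith),
      show cX x = 1 - x from min_eq_right (by linarith)]
    ring
  · intro x hx
    rw [Set.uIcc_of_le (by norm_num : (0 : ℝ) ≤ 1)] at hx
    obtain ⟨h1, h2⟩ := hx
    beta_reduce
    rw [min_eq_right (by linarith), max_eq_left (by linarith),
      show cX x = 1 - 2 * x from min_eq_left (by linarith)]
    ring

lemma hval2 : ∫ x in (-1 : ℝ)..1, ((min 1 (1 - x) - max (-1) (-1 - x)) *
    (max (2 * x) x * (cX x + 1) + (cX x ^ 2 - 1) / 2)) = -(3 / 8) := by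
  rw [calc_piece _ hcont2 0 2 0 (-1/2) 0 4 (-6) 2 ?_ ?_]
  · norm_num
  · intro x hx
    rw [Set.uIcc_of_le (by norm_num : (-1 : ℝ) ≤ 0)] at hx
    obtain ⟨h1, h2⟩ := hx
    beta_reduce
    rw [min_eq_left (by linarith), max_eq_right (by linarith : (-1 : ℝ) ≤ -1 - x),
      max_eq_right (by linarith : 2 * x ≤ x),
      show cX x = 1 - x from min_eq_right (by linarith)]
    ring
  · intro x hx
    rw [Set.uIcc_of_le (by norm_num : (0 : ℝ) ≤ 1)] at hx
    obtain ⟨h1, h2⟩ := hx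
    beta_reduce
    rw [min_eq_right (by linarith), max_eq_left (by linarith : (-1 : ℝ) - x ≤ -1),
      max_eq_left (by linarith : x ≤ 2 * x),
      show cX x = 1 - 2 * x from min_eq_left (by linarith)]
    ring

lemma hval3 : ∫ x in (-1 : ℝ)..1, ((min 1 (1 - x) - max (-1) (-1 - x)) *
    ((cX x ^ 2 - 1) / 2)) = 3 / 8 := by
  rw [calc_piece _ hcont3 0 (-2) 0 (1/2) 0 (-4) 6 (-2) ?_ ?_]
  · norm_num
  · intro x hx
    rw [Set.uIcc_of_le (by norm_num : (-1 : ℝ) ≤ 0)] at hx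
    obtain ⟨h1, h2⟩ := hx
    beta_reduce
    rw [min_eq_left (by linarith), max_eq_right (by linarith : (-1 : ℝ) ≤ -1 - x),
      show cX x = 1 - x from min_eq_right (by linarith)]
    ring
  · intro x hx
    rw [Set.uIcc_of_le (by norm_num : (0 : ℝ) ≤ 1)] at hx
    obtain ⟨h1, h2⟩ := hx
    beta_reduce
    rw [min_eq_right (by linarith), max_eq_left (by linarith : (-1 : ℝ) - x ≤ -1),
      show cX x = 1 - 2 * x from min_eq_left (by linarith)]
    ring

/-- `λ(P) = 16/3`, `∫_P (h(0,0) - h(x,y) + t) = -3/8`, `∫_P t = 3/8`, so the average of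
`h(0,0) - h(x,y) + t` over `P` is `-9/128 < 0` and the average of `t` is `9/128 > 0`. -/
theorem singular_toric_Fano_threefold_invariants :
    volume P9 = 16 / 3 ∧
    (∫ p in P9, (h9 (0, 0) - h9 (p.1, p.2.1) + p.2.2)) = -(3 / 8) ∧
    (∫ p in P9, p.2.2) = 3 / 8 ∧
    (1 / (volume P9).toReal) * (∫ p in P9, (h9 (0, 0) - h9 (p.1, p.2.1) + p.2.2)) =
      -(9 / 128) ∧
    (-(9 / 128) : ℝ) < 0 ∧
    (1 / (volume P9).toReal) * (∫ p in P9, p.2.2) = 9 / 128 ∧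
    (0 : ℝ) < 9 / 128 := by
  have hint1 : IntegrableOn (fun p : ℝ × ℝ × ℝ => (fun _ : ℝ => (1 : ℝ)) p.1 + 0 * p.2.2) P9 :=
    (Continuous.continuousOn (by fun_prop)).integrableOn_compact' isCompact_P9 measurableSet_P9
  have hint2 : IntegrableOn (fun p : ℝ × ℝ × ℝ => (fun x : ℝ => max (2 * x) x) p.1 + 1 * p.2.2) P9 :=
    (Continuous.continuousOn (by fun_prop)).integrableOn_compact' isCompact_P9 measurableSet_P9
  have hint3 : IntegrableOn (fun p : ℝ × ℝ × ℝ => (fun _ : ℝ => (0 : ℝ)) p.1 + 1 * p.2.2) P9 :=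
    (Continuous.continuousOn (by fun_prop)).integrableOn_compact' isCompact_P9 measurableSet_P9
  have h1 := reduce9 (fun _ => 1) 0 hint1
  simp only [one_mul, zero_mul, zero_div, add_zero] at h1
  have h2 := reduce9 (fun x => max (2 * x) x) 1 hint2
  simp only [one_mul] at h2
  have h3 := reduce9 (fun _ => 0) 1 hint3
  simp only [one_mul, zero_mul, zero_add] at h3
  have hv1 : ∫ p in P9, (1 : ℝ) = 16 / 3 := h1.trans hval1
  have hI2 : (∫ p in P9, (h9 (0, 0) - h9 (p.1, p.2.1) + p.2.2)) = -(3 / 8) := by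
    simp only [hpt9]
    exact h2.trans hval2
  have hI3 : (∫ p in P9, p.2.2) = 3 / 8 := h3.trans hval3
  have htr : (volume P9).toReal = 16 / 3 := by
    have hc := setIntegral_const (μ := volume) (s := P9) (1 : ℝ)
    rw [smul_eq_mul, mul_one, measureReal_def] at hc
    rw [← hc]; exact hv1
  have hne : volume P9 ≠ ⊤ := isCompact_P9.measure_lt_top.ne
  have hvol : volume P9 = 16 / 3 := by
    rw [← ENNReal.ofReal_toReal hne, htr]
    rw [ENNReal.ofReal_div_of_pos (by norm_num)]
    norm_num
  refine ⟨hvol, hI2, hI3, ?_, by norm_num, ?_, by norm_num⟩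
  · rw [htr, hI2]; norm_num
  · rw [htr, hI3]; norm_num
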